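/- arXiv:2112.11321 — 3 statements merged into one kernel-verified Lean document; each statement's English description precedes it below -/
import Mathlib

section
/- Weaker eigenvalue-type distillation bound: if τ is a state with ⟨φ|τ|φ⟩ ≥ 1 − ε for a pure state φ and Ω_F(τ) < ∞, then ε ≥ (1 − F_F(φ))/Ω_F(τ). Combined with the bound Ω_F(ρ) ≤ R_F(ρ)·λ_min(ρ)^{-1} for full-rank ρ, this yields ε ≥ λ_min(ρ)(1 − F_F(φ))/R_F(ρ) whenever Ω_F(τ) ≤ Ω_F(ρ). -/
open scoped ENNReal ComplexOrder
open Matrix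

noncomputable section

variable {ι κ : Type*}

/-- Loewner order: `A ≤ B` iff `B - A` is positive semidefinite. -/
def Loe [Fintype ι] (A B : Matrix ι ι ℂ) : Prop := (B - A).PosSemidef

/-- The (non-logarithmic) max-relative entropy `Rmax(ρ‖σ) = inf {λ : ρ ≤ λσ}`,
with the convention `inf ∅ = ∞`. -/
noncomputable def Rmax [Fintype ι] (ρ σ : Matrix ι ι ℂ) : ℝ≥0∞ :=
  sInf {x : ℝ≥0∞ | ∃ l : ℝ, 0 ≤ l ∧ x = ENNReal.ofReal l ∧ ((l : ℂ) • σ - ρ).PosSemidef}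

/-- A density matrix: positive semidefinite with unit trace. -/
def IsState [Fintype ι] (ρ : Matrix ι ι ℂ) : Prop := ρ.PosSemidef ∧ ρ.trace = 1

/-- The projective robustness `Ω_F(ρ) = inf_{σ∈F} Rmax(ρ‖σ) · Rmax(σ‖ρ)`. -/
noncomputable def Omega [Fintype ι] (F : Set (Matrix ι ι ℂ)) (ρ : Matrix ι ι ℂ) : ℝ≥0∞ :=
  ⨅ σ ∈ F, Rmax ρ σ * Rmax σ ρ

/-- The cone generated by `F`: `{cσ : c ≥ 0, σ ∈ F}`. -/
def coneF [Fintype ι] (F : Set (Matrix ι ι ℂ)) : Set (Matrix ι ι ℂ) :=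
  {X | ∃ c : ℝ, 0 ≤ c ∧ ∃ σ ∈ F, X = (c : ℂ) • σ}

/-- The affine hull of `F` (real affine combinations). -/
def affHull [Fintype ι] (F : Set (Matrix ι ι ℂ)) : Set (Matrix ι ι ℂ) :=
  {Z | ∃ (k : ℕ) (c : Fin k → ℝ) (σ : Fin k → Matrix ι ι ℂ),
    (∀ i, σ i ∈ F) ∧ (∑ i, c i) = 1 ∧ Z = ∑ i, ((c i : ℂ) • σ i)}

/-- The generalised robustness `R_F(ρ) = inf_{σ∈F} Rmax(ρ‖σ)`. -/
noncomputable def RF [Fintype ι] (F : Set (Matrix ι ι ℂ)) (ρ : Matrix ι ι ℂ) : ℝ≥0∞ :=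
  ⨅ σ ∈ F, Rmax ρ σ

/-- The resource weight `W_F(ρ) = (inf_{σ∈F} Rmax(σ‖ρ))⁻¹`. -/
noncomputable def WF [Fintype ι] (F : Set (Matrix ι ι ℂ)) (ρ : Matrix ι ι ℂ) : ℝ≥0∞ :=
  (⨅ σ ∈ F, Rmax σ ρ)⁻¹

/-! ### Auxiliary lemmas -/

lemma star_pi_single [Fintype ι] [DecidableEq ι] (i : ι) :
    star (Pi.single i 1 : ι → ℂ) = Pi.single i 1 := by
  ext j
  simp [Pi.single_apply, apply_ite]

lemma psd_diag_re_nonneg [Fintype ι] [DecidableEq ι] {M : Matrix ι ι ℂ}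
    (hM : M.PosSemidef) (i : ι) : 0 ≤ (M i i).re := by
  have h := hM.dotProduct_mulVec_nonneg (Pi.single i 1)
  rw [Complex.le_def] at h
  have he : (star (Pi.single i 1 : ι → ℂ)) ⬝ᵥ (M *ᵥ Pi.single i 1) = M i i := by
    rw [star_pi_single, single_dotProduct]
    simp [mulVec_single]
  rw [he] at h
  simpa using h.1

lemma trace_re_nonneg [Fintype ι] [DecidableEq ι] {M : Matrix ι ι ℂ}
    (hM : M.PosSemidef) : 0 ≤ M.trace.re := by
  have : M.trace.re = ∑ i, (M i i).re := by
    simp [Matrix.trace, Matrix.diag, Complex.re_sum]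
  rw [this]
  exact Finset.sum_nonneg fun i _ => psd_diag_re_nonneg hM i

/-- Feasible scalars in `Rmax` between two states are at least `1`. -/
lemma feas_ge_one [Fintype ι] [DecidableEq ι] {σ τ : Matrix ι ι ℂ}
    (hσ : IsState σ) (hτ : IsState τ) {l : ℝ}
    (hl : ((l : ℂ) • σ - τ).PosSemidef) : 1 ≤ l := by
  have h := trace_re_nonneg hl
  rw [trace_sub, trace_smul, hσ.2, hτ.2] at h
  simp at h
  linarith

lemma conj_mul_re (z : ℂ) : (star z * z).re = ‖z‖ ^ 2 := by
  rw [Complex.star_def, ← Complex.normSq_eq_conj_mul_self]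
  rw [Complex.normSq_eq_norm_sq, Complex.ofReal_re]

/-- For a positive semidefinite `M` and unit vector `ψ`, `⟨ψ|M|ψ⟩ ≤ tr M`. -/
lemma quad_le_trace [Fintype ι] [DecidableEq ι] {M : Matrix ι ι ℂ}
    (hM : M.PosSemidef) (ψ : ι → ℂ) (hψ : star ψ ⬝ᵥ ψ = 1) :
    (star ψ ⬝ᵥ M *ᵥ ψ).re ≤ M.trace.re := by
  obtain ⟨B, rfl⟩ : ∃ B : Matrix ι ι ℂ, M = Bᴴ * B := by
    open scoped MatrixOrder in exact CStarAlgebra.nonneg_iff_eq_star_mul_self.mp hM.nonneg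
  have hL : star ψ ⬝ᵥ (Bᴴ * B) *ᵥ ψ = star (B *ᵥ ψ) ⬝ᵥ (B *ᵥ ψ) := by
    rw [← mulVec_mulVec, dotProduct_mulVec, ← star_star ψ, ← star_mulVec]
  rw [hL]
  have hLre : (star (B *ᵥ ψ) ⬝ᵥ (B *ᵥ ψ)).re = ∑ i, ‖(B *ᵥ ψ) i‖ ^ 2 := by
    simp only [dotProduct, Pi.star_apply, Complex.re_sum]
    exact Finset.sum_congr rfl fun i _ => conj_mul_re _
  have hRre : (Bᴴ * B).trace.re = ∑ j, ∑ i, ‖B i j‖ ^ 2 := by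
    simp only [Matrix.trace, Matrix.diag, Complex.re_sum, Matrix.mul_apply,
      conjTranspose_apply]
    refine Finset.sum_congr rfl fun j _ => ?_
    exact Finset.sum_congr rfl fun i _ => conj_mul_re _
  rw [hLre, hRre, Finset.sum_comm]
  have hψ2 : ∑ j, ‖ψ j‖ ^ 2 = 1 := by
    have h1 : (star ψ ⬝ᵥ ψ).re = 1 := by rw [hψ]; simp
    rw [← h1]
    simp only [dotProduct, Pi.star_apply, Complex.re_sum]
    exact Finset.sum_congr rfl fun j _ => (conj_mul_re _).symm
  refine Finset.sum_le_sum fun i _ => ?_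
  have cs : ‖∑ j, B i j * ψ j‖ ≤
      Real.sqrt (∑ j, ‖B i j‖ ^ 2) * Real.sqrt (∑ j, ‖ψ j‖ ^ 2) := by
    set u : EuclideanSpace ℂ ι := WithLp.toLp 2 (fun j => star (B i j)) with hu
    set w : EuclideanSpace ℂ ι := WithLp.toLp 2 (fun j => ψ j) with hw
    have hinner : (inner ℂ u w : ℂ) = ∑ j, B i j * ψ j := by
      simp [PiLp.inner_apply, hu, hw, RCLike.inner_apply, mul_comm]
    have hnu : ‖u‖ = Real.sqrt (∑ j, ‖B i j‖ ^ 2) := by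
      rw [EuclideanSpace.norm_eq]
      congr 1
      exact Finset.sum_congr rfl fun j _ => by simp [hu]
    have hnw : ‖w‖ = Real.sqrt (∑ j, ‖ψ j‖ ^ 2) := by
      rw [EuclideanSpace.norm_eq]
    calc ‖∑ j, B i j * ψ j‖ = ‖(inner ℂ u w : ℂ)‖ := by rw [hinner]
      _ ≤ ‖u‖ * ‖w‖ := norm_inner_le_norm u w
      _ = _ := by rw [hnu, hnw]
  have h1 : ‖(B *ᵥ ψ) i‖ ^ 2 ≤ (∑ j, ‖B i j‖ ^ 2) * (∑ j, ‖ψ j‖ ^ 2) := by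
    have hBv : (B *ᵥ ψ) i = ∑ j, B i j * ψ j := rfl
    rw [hBv]
    calc ‖∑ j, B i j * ψ j‖ ^ 2
        ≤ (Real.sqrt (∑ j, ‖B i j‖ ^ 2) * Real.sqrt (∑ j, ‖ψ j‖ ^ 2)) ^ 2 :=
          pow_le_pow_left₀ (norm_nonneg _) cs 2
      _ = _ := by
          rw [mul_pow, Real.sq_sqrt (by positivity), Real.sq_sqrt (by positivity)]
  rw [hψ2, mul_one] at h1
  exact h1

/-- Nonnegative real-affine combinations of a Hermitian matrix and the identity
(at the level of eigenvalues) are positive semidefinite. -/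
lemma herm_combo [Fintype ι] [DecidableEq ι] {A : Matrix ι ι ℂ} (hA : A.IsHermitian)
    (a b : ℝ) (h : ∀ i, 0 ≤ a * hA.eigenvalues i + b) :
    ((a : ℂ) • A + (b : ℂ) • 1).PosSemidef := by
  set U : Matrix ι ι ℂ := (hA.eigenvectorUnitary : Matrix ι ι ℂ) with hUdef
  have hU : U * star U = 1 := mem_unitaryGroup_iff.mp hA.eigenvectorUnitary.2
  have key : (a : ℂ) • A + (b : ℂ) • 1
      = U * diagonal (fun i => ((a * hA.eigenvalues i + b : ℝ) : ℂ)) * star U := by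
    have hD : diagonal (fun i => ((a * hA.eigenvalues i + b : ℝ) : ℂ))
        = (a : ℂ) • diagonal (RCLike.ofReal ∘ hA.eigenvalues) + (b : ℂ) • 1 := by
      ext i j
      by_cases hij : i = j
      · subst hij
        simp only [diagonal_apply_eq, Matrix.add_apply, Matrix.smul_apply,
          Matrix.one_apply_eq, Function.comp_apply, smul_eq_mul]
        push_cast
        norm_num [RCLike.ofReal_alg]
      · simp [diagonal_apply_ne _ hij, Matrix.one_apply_ne hij]
    rw [hD]
    conv_lhs => rw [hA.spectral_theorem, Unitary.conjStarAlgAut_apply]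
    rw [Matrix.mul_add, Matrix.add_mul]
    congr 1
    · simp only [smul_mul_assoc, mul_smul_comm]
      rfl
    · simp only [smul_mul_assoc, mul_smul_comm, mul_one, hU]
  rw [key]
  have hdiag : (diagonal (fun i => ((a * hA.eigenvalues i + b : ℝ) : ℂ))).PosSemidef :=
    posSemidef_diagonal_iff.mpr fun i => Complex.zero_le_real.mpr (h i)
  have := hdiag.mul_mul_conjTranspose_same U
  rwa [← Matrix.star_eq_conjTranspose] at this

lemma sum_eigs_eq_trace [Fintype ι] [DecidableEq ι] {A : Matrix ι ι ℂ} (hA : A.IsHermitian) :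
    A.trace = ∑ i, (hA.eigenvalues i : ℂ) := by
  conv_lhs => rw [hA.spectral_theorem, Unitary.conjStarAlgAut_apply]
  rw [Matrix.trace_mul_cycle, Unitary.coe_star_mul_self, Matrix.one_mul, trace_diagonal]
  rfl

/-- Lower bound on a product of two infima of `ℝ≥0∞` sets of "large" elements. -/
lemma le_sInf_mul_sInf {S T : Set ℝ≥0∞} {c : ℝ≥0∞}
    (hS1 : ∀ x ∈ S, 1 ≤ x) (hT1 : ∀ y ∈ T, 1 ≤ y)
    (hSt : ∀ x ∈ S, x ≠ ⊤) (hTt : ∀ y ∈ T, y ≠ ⊤)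
    (h : ∀ x ∈ S, ∀ y ∈ T, c ≤ x * y) : c ≤ sInf S * sInf T := by
  have hS0 : sInf S ≠ 0 := by
    have : (1 : ℝ≥0∞) ≤ sInf S := le_sInf hS1
    exact fun h0 => by simp [h0] at this
  have hT0 : sInf T ≠ 0 := by
    have : (1 : ℝ≥0∞) ≤ sInf T := le_sInf hT1
    exact fun h0 => by simp [h0] at this
  rcases S.eq_empty_or_nonempty with rfl | ⟨x0, hx0⟩
  · rw [sInf_empty, ENNReal.top_mul hT0]
    exact le_top
  rcases T.eq_empty_or_nonempty with rfl | ⟨y0, hy0⟩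
  · rw [sInf_empty, ENNReal.mul_top hS0]
    exact le_top
  have hStop : sInf S ≠ ⊤ := fun htop =>
    (hSt x0 hx0) (top_le_iff.mp (htop ▸ sInf_le hx0))
  have step1 : ∀ y ∈ T, c ≤ sInf S * y := by
    intro y hy
    have hy0' : y ≠ 0 := by
      have := hT1 y hy
      exact fun h0 => by simp [h0] at this
    have hyt : y ≠ ⊤ := hTt y hy
    have : c / y ≤ sInf S :=
      le_sInf fun x hx =>
        (ENNReal.div_le_iff_le_mul (Or.inl hy0') (Or.inl hyt)).mpr (h x hx y hy)
    exact (ENNReal.div_le_iff_le_mul (Or.inl hy0') (Or.inl hyt)).mp this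
  have : c / sInf S ≤ sInf T :=
    le_sInf fun y hy =>
      (ENNReal.div_le_iff_le_mul (Or.inl hS0) (Or.inl hStop)).mpr
        (by rw [mul_comm]; exact step1 y hy)
  have := (ENNReal.div_le_iff_le_mul (Or.inl hS0) (Or.inl hStop)).mp this
  rwa [mul_comm] at this

/-- Weaker eigenvalue-type distillation bound: if `⟨φ|τ|φ⟩ ≥ 1-ε` and
`Ω_F(τ) < ∞`, then `ε ≥ (1 - F_F(φ))/Ω_F(τ)`; combined with
`Ω_F(ρ) ≤ R_F(ρ)·λ_min(ρ)⁻¹` for a full-rank `ρ` with `Ω_F(τ) ≤ Ω_F(ρ)`, this yields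
`ε ≥ λ_min(ρ)(1 - F_F(φ))/R_F(ρ)`. -/
theorem eigenvalue_bound [Fintype ι] [DecidableEq ι] [Nonempty ι]
    (F : Set (Matrix ι ι ℂ)) (hF : IsClosed F) (hFstates : ∀ σ ∈ F, IsState σ)
    (ψ : ι → ℂ) (hψ : star ψ ⬝ᵥ ψ = 1)
    (f : ℝ) (hf0 : 0 ≤ f) (hf1 : f < 1)
    (hfmax : ∀ σ ∈ F, (star ψ ⬝ᵥ (σ *ᵥ ψ)).re ≤ f)
    (ε : ℝ) (hε0 : 0 < ε) (hε1 : ε ≤ 1)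
    (τ : Matrix ι ι ℂ) (hτ : IsState τ) (hfin : Omega F τ ≠ ⊤)
    (hfid : 1 - ε ≤ (star ψ ⬝ᵥ (τ *ᵥ ψ)).re)
    (ρ : Matrix ι ι ℂ) (hρ : IsState ρ) (hfull : IsUnit ρ.det)
    (hach : ∃ σ ∈ F, Rmax ρ σ = RF F ρ)
    (lammin : ℝ) (hlam : lammin = ⨅ i, (hρ.1.isHermitian).eigenvalues i)
    (hmono : Omega F τ ≤ Omega F ρ) :
    ENNReal.ofReal (1 - f) ≤ ENNReal.ofReal ε * Omega F τ ∧
      ENNReal.ofReal (lammin * (1 - f)) ≤ ENNReal.ofReal ε * RF F ρ := by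
  classical
  have hεne : ENNReal.ofReal ε ≠ 0 := by
    simp [ENNReal.ofReal_eq_zero, not_le, hε0]
  have hεtop : ENNReal.ofReal ε ≠ ⊤ := ENNReal.ofReal_ne_top
  -- Part 1
  have part1 : ENNReal.ofReal (1 - f) ≤ ENNReal.ofReal ε * Omega F τ := by
    rw [mul_comm, ← ENNReal.div_le_iff_le_mul (Or.inl hεne) (Or.inl hεtop)]
    refine le_iInf₂ fun σ hσ => ?_
    have hσstate := hFstates σ hσ
    refine le_sInf_mul_sInf ?_ ?_ ?_ ?_ ?_
    · rintro x ⟨l, hl0, rfl, hl⟩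
      exact ENNReal.one_le_ofReal.mpr (feas_ge_one hσstate hτ hl)
    · rintro y ⟨m, hm0, rfl, hm⟩
      exact ENNReal.one_le_ofReal.mpr (feas_ge_one hτ hσstate hm)
    · rintro x ⟨l, hl0, rfl, hl⟩
      exact ENNReal.ofReal_ne_top
    · rintro y ⟨m, hm0, rfl, hm⟩
      exact ENNReal.ofReal_ne_top
    rintro x ⟨l, hl0, rfl, hl⟩ y ⟨m, hm0, rfl, hm⟩
    have hl1 : 1 ≤ l := feas_ge_one hσstate hτ hl
    have hm1 : 1 ≤ m := feas_ge_one hτ hσstate hm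
    -- the key real inequality
    have hkey := quad_le_trace hm ψ hψ
    set t : ℝ := (star ψ ⬝ᵥ (τ *ᵥ ψ)).re with ht
    set s : ℝ := (star ψ ⬝ᵥ (σ *ᵥ ψ)).re with hs
    have hLHS : (star ψ ⬝ᵥ ((m : ℂ) • τ - σ) *ᵥ ψ).re = m * t - s := by
      rw [sub_mulVec, dotProduct_sub, smul_mulVec, dotProduct_smul]
      simp [Complex.sub_re, smul_eq_mul, Complex.re_ofReal_mul, ht, hs]
    have hTR : ((m : ℂ) • τ - σ).trace.re = m - 1 := by
      rw [trace_sub, trace_smul, hτ.2, (hFstates σ hσ).2]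
      simp [smul_eq_mul]
    rw [hLHS, hTR] at hkey
    have hsf : s ≤ f := hfmax σ hσ
    have htε : 1 - ε ≤ t := hfid
    have hreal : 1 - f ≤ l * m * ε := by
      nlinarith [mul_le_mul_of_nonneg_left (show 1 - t ≤ ε by linarith)
          (show (0:ℝ) ≤ m by linarith),
        mul_le_mul_of_nonneg_right hl1 (show (0:ℝ) ≤ m * ε by positivity)]
    rw [← ENNReal.ofReal_mul hl0]
    refine (ENNReal.div_le_iff_le_mul (Or.inl hεne) (Or.inl hεtop)).mpr ?_
    rw [← ENNReal.ofReal_mul (by positivity)]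
    exact ENNReal.ofReal_le_ofReal hreal
  refine ⟨part1, ?_⟩
  -- Part 2
  obtain ⟨σ₀, hσ₀F, hσ₀⟩ := hach
  have hρH := hρ.1.isHermitian
  have heigpos : ∀ i, 0 < hρH.eigenvalues i := by
    intro i
    rcases (hρ.1.eigenvalues_nonneg i).lt_or_eq with h | h
    · exact h
    · exfalso
      have hdet : ρ.det = ∏ j, (hρH.eigenvalues j : ℂ) := hρH.det_eq_prod_eigenvalues
      have : ρ.det = 0 := by
        rw [hdet]
        exact Finset.prod_eq_zero (Finset.mem_univ i) (by rw [← h]; simp)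
      exact hfull.ne_zero this
  have hlam_le : ∀ i, lammin ≤ hρH.eigenvalues i := by
    intro i
    rw [hlam]
    exact ciInf_le (Set.finite_range _).bddBelow i
  have hlam0 : 0 < lammin := by
    obtain ⟨i0, _, hi0⟩ := Finset.exists_min_image Finset.univ
      (fun i => hρH.eigenvalues i) ⟨Classical.arbitrary ι, Finset.mem_univ _⟩
    have : hρH.eigenvalues i0 ≤ lammin := by
      rw [hlam]
      exact le_ciInf fun j => hi0 j (Finset.mem_univ j)
    exact lt_of_lt_of_le (heigpos i0) this
  -- σ₀ ≤ λmin⁻¹ • ρ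
  have hσ₀state := hFstates σ₀ hσ₀F
  have hσ₀H := hσ₀state.1.isHermitian
  have heig1 : ∀ i, hσ₀H.eigenvalues i ≤ 1 := by
    intro i
    have hsum : ∑ j, hσ₀H.eigenvalues j = 1 := by
      have := sum_eigs_eq_trace hσ₀H
      rw [hσ₀state.2] at this
      have := congrArg Complex.re this.symm
      simpa [Complex.re_sum] using this
    rw [← hsum]
    exact Finset.single_le_sum (fun j _ => hσ₀state.1.eigenvalues_nonneg j)
      (Finset.mem_univ i)
  have A1 : (((lammin⁻¹ : ℝ) : ℂ) • ρ + ((-1 : ℝ) : ℂ) • 1).PosSemidef := by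
    refine herm_combo hρH lammin⁻¹ (-1) fun i => ?_
    have h1 : lammin⁻¹ * lammin = 1 := inv_mul_cancel₀ hlam0.ne'
    nlinarith [mul_le_mul_of_nonneg_left (hlam_le i) (inv_nonneg.mpr hlam0.le)]
  have A2 : (((-1 : ℝ) : ℂ) • σ₀ + ((1 : ℝ) : ℂ) • 1).PosSemidef := by
    refine herm_combo hσ₀H (-1) 1 fun i => ?_
    have := heig1 i
    linarith
  have hPSD : (((lammin⁻¹ : ℝ) : ℂ) • ρ - σ₀).PosSemidef := by
    have := A1.add A2
    have heq : (((lammin⁻¹ : ℝ) : ℂ) • ρ + ((-1 : ℝ) : ℂ) • 1) +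
        (((-1 : ℝ) : ℂ) • σ₀ + ((1 : ℝ) : ℂ) • 1) = ((lammin⁻¹ : ℝ) : ℂ) • ρ - σ₀ := by
      push_cast
      simp only [neg_smul, one_smul]
      abel
    rwa [heq] at this
  have hRm : Rmax σ₀ ρ ≤ ENNReal.ofReal lammin⁻¹ :=
    sInf_le ⟨lammin⁻¹, inv_nonneg.mpr hlam0.le, rfl, hPSD⟩
  calc ENNReal.ofReal (lammin * (1 - f))
      = ENNReal.ofReal lammin * ENNReal.ofReal (1 - f) := ENNReal.ofReal_mul hlam0.le
    _ ≤ ENNReal.ofReal lammin * (ENNReal.ofReal ε * Omega F τ) :=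
        mul_le_mul_right part1 _
    _ ≤ ENNReal.ofReal lammin * (ENNReal.ofReal ε * Omega F ρ) :=
        mul_le_mul_right (mul_le_mul_right hmono _) _
    _ ≤ ENNReal.ofReal lammin * (ENNReal.ofReal ε * (Rmax ρ σ₀ * Rmax σ₀ ρ)) :=
        mul_le_mul_right (mul_le_mul_right (iInf₂_le σ₀ hσ₀F) _) _
    _ ≤ ENNReal.ofReal lammin * (ENNReal.ofReal ε * (RF F ρ * ENNReal.ofReal lammin⁻¹)) := by
        rw [hσ₀]
        exact mul_le_mul_right (mul_le_mul_right (mul_le_mul_right hRm _) _) _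
    _ = ENNReal.ofReal ε * RF F ρ * (ENNReal.ofReal lammin * ENNReal.ofReal lammin⁻¹) := by
        ring
    _ = ENNReal.ofReal ε * RF F ρ := by
        rw [← ENNReal.ofReal_mul hlam0.le, mul_inv_cancel₀ hlam0.ne', ENNReal.ofReal_one,
          mul_one]
end
end

section
/- Achievability upper bound: let φ be a pure state with φ ≤ λσ for some σ ∈ F and λ = R_F(φ) > 1, and for ε ∈ (0, (λ−1)/λ] define τ_ε := (1−ε)φ + ε(λσ − φ)/(λ−1). Then τ_ε is a density matrix satisfying ⟨φ|τ_ε|φ⟩ ≥ 1 − ε and Ω_F(τ_ε) ≤ (1−ε)(λ−1)/ε. -/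
open scoped ENNReal ComplexOrder
open Matrix

noncomputable section

variable {ι κ : Type*}

section Helpers

variable [Fintype ι]

private lemma psd_smul_nonneg {A : Matrix ι ι ℂ} (hA : A.PosSemidef)
    {c : ℝ} (hc : 0 ≤ c) : ((c : ℂ) • A).PosSemidef := by
  refine Matrix.PosSemidef.of_dotProduct_mulVec_nonneg ?_ (fun x => ?_)
  · unfold Matrix.IsHermitian
    rw [Matrix.conjTranspose_smul, hA.1.eq]
    simp
  · rw [Matrix.smul_mulVec, dotProduct_smul]
    exact smul_nonneg (by exact_mod_cast hc) (hA.dotProduct_mulVec_nonneg x)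

private lemma psd_add {A B : Matrix ι ι ℂ} (hA : A.PosSemidef) (hB : B.PosSemidef) :
    (A + B).PosSemidef := by
  refine Matrix.PosSemidef.of_dotProduct_mulVec_nonneg (hA.1.add hB.1) (fun x => ?_)
  rw [Matrix.add_mulVec, dotProduct_add]
  exact add_nonneg (hA.dotProduct_mulVec_nonneg x) (hB.dotProduct_mulVec_nonneg x)

private lemma vecMulVec_mulVec' (v w x : ι → ℂ) :
    Matrix.vecMulVec v w *ᵥ x = (w ⬝ᵥ x) • v := by
  ext i
  simp [Matrix.mulVec, Matrix.vecMulVec_apply, dotProduct, Finset.mul_sum,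
    mul_assoc, mul_comm, mul_left_comm]

private lemma psd_outer (v : ι → ℂ) : (Matrix.vecMulVec v (star v)).PosSemidef := by
  refine Matrix.PosSemidef.of_dotProduct_mulVec_nonneg ?_ (fun x => ?_)
  · ext i j
    simp [Matrix.conjTranspose_apply, Matrix.vecMulVec_apply, mul_comm]
  · rw [vecMulVec_mulVec', dotProduct_smul]
    have h1 : star v ⬝ᵥ x = star (star x ⬝ᵥ v) := by
      simp [dotProduct, Finset.sum_comm, mul_comm, map_sum]
    rw [h1, smul_eq_mul]
    exact star_mul_self_nonneg _

private lemma Rmax_le' {A B : Matrix ι ι ℂ} {l : ℝ} (hl : 0 ≤ l)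
    (h : ((l : ℂ) • B - A).PosSemidef) : Rmax A B ≤ ENNReal.ofReal l :=
  sInf_le ⟨l, hl, rfl, h⟩

end Helpers

set_option maxHeartbeats 1000000 in
/-- Achievability: for a pure state `φ = |ψ⟩⟨ψ|` with `φ ≤ λσ`, `σ ∈ F`,
`λ = R_F(φ) > 1`, and `ε ∈ (0, (λ-1)/λ]`, the state
`τ_ε = (1-ε)φ + ε(λσ - φ)/(λ-1)` is a density matrix with `⟨φ|τ_ε|φ⟩ ≥ 1-ε` and
`Ω_F(τ_ε) ≤ (1-ε)(λ-1)/ε`. -/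
theorem omega_distillation_achievability [Fintype ι]
    (F : Set (Matrix ι ι ℂ)) (hF : IsClosed F) (hconv : Convex ℝ F)
    (hFstates : ∀ σ ∈ F, IsState σ)
    (ψ : ι → ℂ) (hψ : star ψ ⬝ᵥ ψ = 1)
    (φ : Matrix ι ι ℂ) (hφ : φ = vecMulVec ψ (star ψ))
    (σ : Matrix ι ι ℂ) (hσ : σ ∈ F)
    (lam : ℝ) (hlam1 : 1 < lam) (hle : Loe φ ((lam : ℂ) • σ))
    (hRF : RF F φ = ENNReal.ofReal lam)
    (ε : ℝ) (hε0 : 0 < ε) (hεub : ε ≤ (lam - 1) / lam)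
    (τ : Matrix ι ι ℂ)
    (hτdef : τ = ((1 - ε : ℝ) : ℂ) • φ + ((ε / (lam - 1) : ℝ) : ℂ) • ((lam : ℂ) • σ - φ)) :
    IsState τ ∧ 1 - ε ≤ (star ψ ⬝ᵥ (τ *ᵥ ψ)).re ∧
      Omega F τ ≤ ENNReal.ofReal ((1 - ε) * (lam - 1) / ε) := by
  have hlam0 : (0:ℝ) < lam - 1 := by linarith
  have hlamp : (0:ℝ) < lam := by linarith
  have hεlam : ε * lam ≤ lam - 1 := by
    rw [le_div_iff₀ hlamp] at hεub; linarith
  have hε1 : ε < 1 := by nlinarith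
  set a : ℝ := 1 - ε - ε / (lam - 1) with ha_def
  have ha : 0 ≤ a := by
    have : ε / (lam - 1) ≤ 1 - ε := by
      rw [div_le_iff₀ hlam0]; nlinarith
    simp only [ha_def]; linarith
  have hφpsd : φ.PosSemidef := hφ ▸ psd_outer ψ
  have hgap : ((lam : ℂ) • σ - φ).PosSemidef := hle
  have hτpsd : τ.PosSemidef := by
    rw [hτdef]
    exact psd_add (psd_smul_nonneg hφpsd (by linarith)) (psd_smul_nonneg hgap (by positivity))
  have hclam : ((lam : ℂ) - 1) ≠ 0 := by
    intro h
    have : (lam : ℂ) = 1 := by linear_combination h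
    have := Complex.ofReal_injective (by exact_mod_cast this : (lam:ℂ) = ((1:ℝ):ℂ))
    linarith
  have hφtr : φ.trace = 1 := by
    rw [hφ]
    have : (Matrix.vecMulVec ψ (star ψ)).trace = ψ ⬝ᵥ star ψ := by
      simp [Matrix.trace, Matrix.diag, Matrix.vecMulVec_apply, dotProduct]
    rw [this, dotProduct_comm, hψ]
  have hσtr : σ.trace = 1 := (hFstates σ hσ).2
  have hstate : IsState τ := by
    refine ⟨hτpsd, ?_⟩
    rw [hτdef, Matrix.trace_add, Matrix.trace_smul, Matrix.trace_smul, Matrix.trace_sub,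
      Matrix.trace_smul, hφtr, hσtr]
    push_cast
    simp only [smul_eq_mul, mul_one]
    field_simp
    ring
  have hφψ : φ *ᵥ ψ = ψ := by
    rw [hφ, vecMulVec_mulVec', hψ, one_smul]
  have hgapq : (0:ℂ) ≤ star ψ ⬝ᵥ (((lam : ℂ) • σ - φ) *ᵥ ψ) := hgap.dotProduct_mulVec_nonneg ψ
  have hfid : 1 - ε ≤ (star ψ ⬝ᵥ (τ *ᵥ ψ)).re := by
    rw [hτdef, Matrix.add_mulVec, dotProduct_add, Matrix.smul_mulVec,
      Matrix.smul_mulVec, dotProduct_smul, dotProduct_smul, hφψ, hψ]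
    set q : ℂ := star ψ ⬝ᵥ (((lam : ℂ) • σ - φ) *ᵥ ψ) with hq
    have hqre : 0 ≤ q.re := by
      have := hgapq
      rw [Complex.le_def] at this
      simpa using this.1
    have hc : 0 ≤ ε / (lam - 1) := by positivity
    simp only [smul_eq_mul, mul_one, Complex.add_re, Complex.re_ofReal_mul,
      Complex.ofReal_re]
    nlinarith
  refine ⟨hstate, hfid, ?_⟩
  -- upper bound direction: (1-ε)λ σ - τ = a (λσ - φ)
  have key1 : ((((1 - ε) * lam : ℝ) : ℂ) • σ - τ) = ((a : ℝ) : ℂ) • ((lam : ℂ) • σ - φ) := by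
    rw [hτdef, ha_def]
    push_cast
    match_scalars <;> field_simp <;> ring
  have key2 : (((((lam - 1) / (ε * lam)) : ℝ) : ℂ) • τ - σ)
      = (((lam - 1) * a / (ε * lam) : ℝ) : ℂ) • φ := by
    rw [hτdef, ha_def]
    push_cast
    match_scalars <;> field_simp <;> ring
  have h1 : Rmax τ σ ≤ ENNReal.ofReal ((1 - ε) * lam) := by
    refine Rmax_le' (by nlinarith) ?_
    rw [key1]
    exact psd_smul_nonneg hgap ha
  have h2 : Rmax σ τ ≤ ENNReal.ofReal ((lam - 1) / (ε * lam)) := by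
    refine Rmax_le' (by positivity) ?_
    rw [key2]
    exact psd_smul_nonneg hφpsd (by positivity)
  have h3 : Omega F τ ≤ Rmax τ σ * Rmax σ τ := by
    exact iInf₂_le σ hσ
  calc Omega F τ ≤ Rmax τ σ * Rmax σ τ := h3
    _ ≤ ENNReal.ofReal ((1 - ε) * lam) * ENNReal.ofReal ((lam - 1) / (ε * lam)) :=
        mul_le_mul' h1 h2
    _ = ENNReal.ofReal ((1 - ε) * (lam - 1) / ε) := by
        rw [← ENNReal.ofReal_mul (by nlinarith)]
        congr 1
        field_simp
end
end

section
/- Lower bound on exact transformation probability: for states ρ, ρ' with V_F(ρ) := max_{σ∈F}⟨Π_ρ, σ⟩ < 1 and λ := R^F_F(ρ') < ∞ (i.e. there is σ ∈ F with λσ − ρ' ∈ cone(F)), the map E(X) := μ⟨Π_ρ, X⟩ρ' + ⟨I − Π_ρ, X⟩(λσ − ρ')/(λ−1) with μ = min{1, (1−V_F(ρ))/((λ−1)V_F(ρ))} is completely positive, trace-non-increasing, maps cone(F) into cone(F), and satisfies E(ρ) = μρ'. Hence the transformation ρ → ρ' is achievable by a free probabilistic operation with probability at least min{1, (1−V_F(ρ))/((R^F_F(ρ')−1)V_F(ρ))}.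 -/
open scoped ENNReal ComplexOrder
open Matrix

noncomputable section

variable {ι κ : Type*}

section Aux

variable {n m : Type*}

lemma Matrix.posSemidef_iff_eq_transpose_mul_self [Fintype n] {A : Matrix n n ℂ} :
    A.PosSemidef ↔ ∃ B : Matrix n n ℂ, A = Bᴴ * B := by
  classical
  open scoped MatrixOrder in
  constructor
  · intro hA
    obtain ⟨X, hX, -, rfl⟩ :=
      CFC.exists_sqrt_of_isSelfAdjoint_of_quasispectrumRestricts hA.isHermitian
        (QuasispectrumRestricts.nnreal_of_nonneg hA.nonneg)
    exact ⟨X, by rw [← Matrix.star_eq_conjTranspose, hX.star_eq]⟩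
  · rintro ⟨B, rfl⟩
    exact Matrix.posSemidef_conjTranspose_mul_self B

lemma psd_smul [Fintype n] {A : Matrix n n ℂ} (hA : A.PosSemidef) {c : ℝ} (hc : 0 ≤ c) :
    ((c : ℂ) • A).PosSemidef := by
  constructor
  · show _ = _
    rw [Matrix.conjTranspose_smul, hA.1, Complex.star_def, Complex.conj_ofReal]
  · exact (hA.smul (show (0 : ℂ) ≤ (c : ℂ) by exact_mod_cast hc)).2

lemma psd_trace_nonneg [Fintype n] [DecidableEq n] {A : Matrix n n ℂ} (hA : A.PosSemidef) :
    0 ≤ A.trace := by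
  refine Finset.sum_nonneg fun i _ => ?_
  have := hA.dotProduct_mulVec_nonneg (Pi.single i 1)
  simpa [dotProduct, Matrix.mulVec, Pi.single_apply] using this

lemma trace_mul_psd_nonneg [Fintype n] [DecidableEq n] {P X : Matrix n n ℂ} (hP : P.PosSemidef)
    (hX : X.PosSemidef) : 0 ≤ (P * X).trace := by
  obtain ⟨B, rfl⟩ := Matrix.posSemidef_iff_eq_transpose_mul_self.mp hP
  rw [Matrix.mul_assoc, Matrix.trace_mul_comm]
  exact psd_trace_nonneg (hX.mul_mul_conjTranspose_same B)

lemma kron_conjTranspose [Fintype n] [Fintype m] (A : Matrix n n ℂ) (B : Matrix m m ℂ) :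
    (Matrix.kroneckerMap (· * ·) A B)ᴴ = Matrix.kroneckerMap (· * ·) Aᴴ Bᴴ := by
  ext ⟨i, k⟩ ⟨j, l⟩
  simp [Matrix.conjTranspose_apply, Matrix.kroneckerMap_apply, mul_comm]

lemma kron_psd [Fintype n] [Fintype m] {A : Matrix n n ℂ} {B : Matrix m m ℂ}
    (hA : A.PosSemidef) (hB : B.PosSemidef) :
    (Matrix.kroneckerMap (· * ·) A B).PosSemidef := by
  obtain ⟨C, rfl⟩ := Matrix.posSemidef_iff_eq_transpose_mul_self.mp hA
  obtain ⟨D, rfl⟩ := Matrix.posSemidef_iff_eq_transpose_mul_self.mp hB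
  rw [Matrix.mul_kronecker_mul, ← kron_conjTranspose]
  exact Matrix.posSemidef_conjTranspose_mul_self _

lemma real_smul_mat [Fintype n] (r : ℝ) (M : Matrix n n ℂ) : r • M = (r : ℂ) • M := by
  ext i j
  simp [Matrix.smul_apply, Complex.real_smul]

lemma coneF_smul [Fintype n] {F : Set (Matrix n n ℂ)} {a : ℝ} (ha : 0 ≤ a)
    {X : Matrix n n ℂ} (hX : X ∈ coneF F) : (a : ℂ) • X ∈ coneF F := by
  obtain ⟨c, hc, σ, hσ, rfl⟩ := hX
  exact ⟨a * c, mul_nonneg ha hc, σ, hσ, by push_cast; rw [smul_smul]⟩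

lemma coneF_add [Fintype n] {F : Set (Matrix n n ℂ)} (hconv : Convex ℝ F)
    {X Y : Matrix n n ℂ} (hX : X ∈ coneF F) (hY : Y ∈ coneF F) : X + Y ∈ coneF F := by
  obtain ⟨a, ha, σ₁, hσ₁, rfl⟩ := hX
  obtain ⟨b, hb, σ₂, hσ₂, rfl⟩ := hY
  rcases eq_or_lt_of_le (add_nonneg ha hb) with hab | hab
  · have ha0 : a = 0 := by linarith
    have hb0 : b = 0 := by linarith
    exact ⟨0, le_refl 0, σ₁, hσ₁, by simp [ha0, hb0]⟩
  · refine ⟨a + b, le_of_lt hab, (a / (a + b)) • σ₁ + (b / (a + b)) • σ₂,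
      hconv hσ₁ hσ₂ (div_nonneg ha hab.le) (div_nonneg hb hab.le) (by field_simp), ?_⟩
    rw [real_smul_mat, real_smul_mat, smul_add, smul_smul, smul_smul]
    have hne : ((a + b : ℝ) : ℂ) ≠ 0 := Complex.ofReal_ne_zero.mpr (ne_of_gt hab)
    have h1 : ((a + b : ℝ) : ℂ) * ((a / (a + b) : ℝ) : ℂ) = (a : ℂ) := by
      push_cast at hne ⊢; field_simp
    have h2 : ((a + b : ℝ) : ℂ) * ((b / (a + b) : ℝ) : ℂ) = (b : ℂ) := by
      push_cast at hne ⊢; field_simp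
    rw [h1, h2]

end Aux

/-- Lower bound on exact transformation probability: with `P` the support
projection of `ρ`, `V_F(ρ) ≤ v < 1`, `λ = R^F_F(ρ') > 1` witnessed by `σ ∈ F'` with
`λσ - ρ' ∈ cone(F')`, and `μ = min{1, (1-v)/((λ-1)v)}`, the map
`E(X) = μ⟨P,X⟩ρ' + ⟨I-P,X⟩(λσ-ρ')/(λ-1)` is completely positive (PSD Choi operator),
trace-non-increasing, maps `cone(F)` into `cone(F')`, and satisfies `E(ρ) = μρ'`;
hence `ρ → ρ'` is achievable by a free probabilistic operation with probability `μ`. -/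
theorem probability_lower_bound_map [Fintype ι] [DecidableEq ι] [Fintype κ] [DecidableEq κ]
    (F : Set (Matrix ι ι ℂ)) (F' : Set (Matrix κ κ ℂ))
    (hF : IsClosed F) (hF' : IsClosed F') (hconvF' : Convex ℝ F')
    (hFstates : ∀ π ∈ F, IsState π) (hF'states : ∀ σ ∈ F', IsState σ)
    (ρ : Matrix ι ι ℂ) (ρ' : Matrix κ κ ℂ) (hρ : IsState ρ) (hρ' : IsState ρ')
    (P : Matrix ι ι ℂ) (hP : P.PosSemidef) (hPP : P * P = P) (hPρ : P * ρ = ρ)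
    (v : ℝ) (hv0 : 0 ≤ v) (hv1 : v < 1)
    (hv : ∀ π ∈ F, ((P * π).trace).re ≤ v)
    (lam : ℝ) (hlam : 1 < lam)
    (σ : Matrix κ κ ℂ) (hσ : σ ∈ F') (hcone : ((lam : ℂ) • σ - ρ') ∈ coneF F')
    (mu : ℝ) (hmu : mu = min 1 ((1 - v) / ((lam - 1) * v)))
    (E : Matrix ι ι ℂ → Matrix κ κ ℂ)
    (hEdef : E = fun X => ((mu : ℂ) * (P * X).trace) • ρ' +
      (((1 - P) * X).trace) • (((lam - 1 : ℝ) : ℂ)⁻¹ • ((lam : ℂ) • σ - ρ'))) :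
    (Matrix.kroneckerMap (· * ·) ((mu : ℂ) • P) ρ' +
        Matrix.kroneckerMap (· * ·) (1 - P)
          (((lam - 1 : ℝ) : ℂ)⁻¹ • ((lam : ℂ) • σ - ρ'))).PosSemidef ∧
      (∀ X : Matrix ι ι ℂ, X.PosSemidef → ((E X).trace).re ≤ (X.trace).re) ∧
      (∀ π ∈ coneF F, E π ∈ coneF F') ∧
      E ρ = ((mu : ℝ) : ℂ) • ρ' := by
  obtain ⟨c, hc0, σ', hσ', hcσ'⟩ := hcone
  have hσ'st := hF'states σ' hσ'
  have hσst := hF'states σ hσ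
  have hlam1 : (lam - 1 : ℝ) ≠ 0 := by linarith
  -- c = lam - 1
  have hcl : (c : ℂ) = ((lam - 1 : ℝ) : ℂ) := by
    have h1 : ((lam : ℂ) • σ - ρ').trace = ((c : ℂ) • σ').trace := by rw [hcσ']
    rw [Matrix.trace_sub, Matrix.trace_smul, Matrix.trace_smul, hσst.2, hσ'st.2, hρ'.2] at h1
    push_cast
    simpa [smul_eq_mul] using h1.symm
  -- the normalized tail state equals σ'
  have hτexpr : ((lam - 1 : ℝ) : ℂ)⁻¹ • ((lam : ℂ) • σ - ρ') = σ' := by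
    rw [hcσ', hcl, smul_smul, inv_mul_cancel₀ (by exact_mod_cast hlam1), one_smul]
  have hE' : ∀ X, E X = ((mu : ℂ) * (P * X).trace) • ρ' + (((1 - P) * X).trace) • σ' := by
    intro X
    rw [hEdef]
    simp only [hτexpr]
  -- mu facts
  have hmu1 : mu ≤ 1 := by rw [hmu]; exact min_le_left _ _
  have hmu0 : 0 ≤ mu := by
    rw [hmu]
    exact le_min zero_le_one
      (div_nonneg (by linarith) (mul_nonneg (by linarith) hv0))
  -- 1 - P is PSD
  have h1P : (1 - P : Matrix ι ι ℂ).PosSemidef := by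
    refine Matrix.posSemidef_iff_eq_transpose_mul_self.mpr ⟨1 - P, ?_⟩
    have hH : (1 - P : Matrix ι ι ℂ)ᴴ = 1 - P := by
      rw [Matrix.conjTranspose_sub, Matrix.conjTranspose_one, hP.1]
    rw [hH, Matrix.mul_sub, Matrix.sub_mul, Matrix.sub_mul, Matrix.one_mul, Matrix.one_mul,
      Matrix.mul_one, hPP]
    abel
  have hsub : ∀ X : Matrix ι ι ℂ, ((1 - P) * X).trace = X.trace - (P * X).trace := by
    intro X
    rw [Matrix.sub_mul, Matrix.one_mul, Matrix.trace_sub]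
  refine ⟨?_, ?_, ?_, ?_⟩
  · -- Choi PSD
    rw [hτexpr]
    exact (kron_psd (psd_smul hP hmu0) hρ'.1).add (kron_psd h1P hσ'st.1)
  · -- trace non-increasing
    intro X hX
    have htr : (E X).trace = (mu : ℂ) * (P * X).trace + (X.trace - (P * X).trace) := by
      rw [hE' X, Matrix.trace_add, Matrix.trace_smul, Matrix.trace_smul, hρ'.2, hσ'st.2,
        hsub X, smul_eq_mul, smul_eq_mul, mul_one, mul_one]
    have ht0 : 0 ≤ ((P * X).trace).re := (Complex.nonneg_iff.mp (trace_mul_psd_nonneg hP hX)).1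
    rw [htr]
    simp only [Complex.add_re, Complex.sub_re, Complex.re_ofReal_mul]
    nlinarith
  · -- cone preservation
    intro π hπ
    obtain ⟨a, ha0, π₀, hπ₀, rfl⟩ := hπ
    have hπ₀st := hFstates π₀ hπ₀
    have ht0c : 0 ≤ (P * π₀).trace := trace_mul_psd_nonneg hP hπ₀st.1
    set t : ℝ := ((P * π₀).trace).re with htdef
    have hteq : (P * π₀).trace = (t : ℂ) := by
      have him := (Complex.nonneg_iff.mp ht0c).2
      exact Complex.ext (by simp [htdef]) (by simp [← him])
    have ht0 : 0 ≤ t := (Complex.nonneg_iff.mp ht0c).1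
    have htv : t ≤ v := hv π₀ hπ₀
    -- ρ' in terms of σ and σ'
    have hρ'eq : ρ' = (lam : ℂ) • σ - ((lam - 1 : ℝ) : ℂ) • σ' := by
      rw [← hcl, ← hcσ', sub_sub_cancel]
    -- coefficients
    have hc1 : 0 ≤ mu * t * lam := by positivity
    have hc2 : 0 ≤ 1 - t - mu * t * (lam - 1) := by
      rcases eq_or_lt_of_le hv0 with hv' | hv'
      · have : t = 0 := le_antisymm (by linarith) ht0
        rw [this]; ring_nf; norm_num
      · have hmu2 : mu ≤ (1 - v) / ((lam - 1) * v) := by rw [hmu]; exact min_le_right _ _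
        have hD : 0 < (lam - 1) * v := mul_pos (by linarith) hv'
        have hkey : mu * ((lam - 1) * v) ≤ 1 - v := (le_div_iff₀ hD).mp hmu2
        nlinarith [mul_le_mul_of_nonneg_right hkey ht0]
    -- the value of E π₀
    have hval : E π₀ = ((mu * t * lam : ℝ) : ℂ) • σ +
        (((1 - t - mu * t * (lam - 1) : ℝ)) : ℂ) • σ' := by
      rw [hE' π₀, hsub π₀, hπ₀st.2, hteq, hρ'eq]
      push_cast
      module
    have hmem : E π₀ ∈ coneF F' := by
      rw [hval]
      exact coneF_add hconvF' ⟨_, hc1, σ, hσ, rfl⟩ ⟨_, hc2, σ', hσ', rfl⟩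
    have hEsm : E ((a : ℂ) • π₀) = (a : ℂ) • E π₀ := by
      rw [hE', hE', Matrix.mul_smul, Matrix.mul_smul, Matrix.trace_smul, Matrix.trace_smul]
      simp only [smul_eq_mul]
      module
    rw [hEsm]
    exact coneF_smul ha0 hmem
  · -- action on ρ
    rw [hE' ρ]
    have h1 : (P * ρ).trace = 1 := by rw [hPρ, hρ.2]
    rw [hsub ρ, h1, hρ.2, sub_self, zero_smul, add_zero, mul_one]
end
end
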